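/- arXiv:1508.07713 — 6 statements merged into one kernel-verified Lean document; each statement's English description precedes it below -/
import Mathlib

section
/- If G is a well-covered graph and S is an independent set of vertices of G, then the localization G_S (the induced subgraph of G on the vertices outside S and outside the neighborhood of S) is well-covered, and its independence number satisfies α(G_S) = α(G) − |S|. -/
open Finset

section EdgeIdealPaper

variable {V : Type*} [Fintype V] [DecidableEq V]

/-- `S` is an independent set of vertices in `G`. -/
def IsIndep (G : SimpleGraph V) (S : Finset V) : Prop :=
  ∀ u ∈ S, ∀ v ∈ S, ¬ G.Adj u v

/-- `S` is a maximal independent set of the induced subgraph of `G` on `A`. -/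
def IsMaxIndepIn (G : SimpleGraph V) (A S : Finset V) : Prop :=
  S ⊆ A ∧ IsIndep G S ∧ ∀ v ∈ A, v ∉ S → ¬ IsIndep G (insert v S)

open scoped Classical in
/-- The independence number of the induced subgraph of `G` on `A`. -/
noncomputable def alphaIn (G : SimpleGraph V) (A : Finset V) : ℕ :=
  ((A.powerset).filter (fun S => IsIndep G S)).sup Finset.card

/-- The induced subgraph of `G` on `A` is well-covered. -/
def WellCoveredIn (G : SimpleGraph V) (A : Finset V) : Prop :=
  ∀ S, IsMaxIndepIn G A S → S.card = alphaIn G A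

/-- The induced subgraph of `G` on `A` is in the class `W₂`. -/
def W2In (G : SimpleGraph V) (A : Finset V) : Prop :=
  WellCoveredIn G A ∧
    ∀ x ∈ A, WellCoveredIn G (A.erase x) ∧ alphaIn G (A.erase x) = alphaIn G A

open scoped Classical in
/-- The neighborhood of a vertex `a` in `G`, as a `Finset`. -/
noncomputable def nbr (G : SimpleGraph V) (a : V) : Finset V :=
  univ.filter (fun v => G.Adj a v)

open scoped Classical in
/-- The neighborhood `N_G(S)` of a set `S` of vertices: vertices outside `S`
adjacent to some vertex of `S`. -/
noncomputable def nbrSet (G : SimpleGraph V) (S : Finset V) : Finset V :=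
  univ.filter (fun v => v ∉ S ∧ ∃ u ∈ S, G.Adj u v)

/-- The vertex set of the localization `G_S = G \ (S ∪ N_G(S))`. -/
noncomputable def loc (G : SimpleGraph V) (S : Finset V) : Finset V :=
  univ \ (S ∪ nbrSet G S)

/-- The vertex set of `G_{ab} = G \ (N_G(a) ∪ N_G(b))`. -/
noncomputable def locE (G : SimpleGraph V) (a b : V) : Finset V :=
  univ \ (nbr G a ∪ nbr G b)

/-- The induced subgraph of `G` on `A` has no isolated vertices. -/
def NoIsolatedIn (G : SimpleGraph V) (A : Finset V) : Prop :=
  ∀ v ∈ A, ∃ u ∈ A, G.Adj v u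

open scoped Classical in
/-- The reduced Euler characteristic `∑_{F} (-1)^{|F|-1}` (the empty face
contributing `-1`) of the independence complex of the induced subgraph of `G` on `A`. -/
noncomputable def indEuler (G : SimpleGraph V) (A : Finset V) : ℤ :=
  -∑ S ∈ (A.powerset).filter (fun S => IsIndep G S), (-1 : ℤ) ^ S.card

end EdgeIdealPaper

section EdgeIdealPaper

variable {V : Type*} [Fintype V] [DecidableEq V]

lemma isIndep_mono (G : SimpleGraph V) {T U : Finset V} (h : T ⊆ U) (hU : IsIndep G U) :
    IsIndep G T := fun u hu v hv => hU u (h hu) v (h hv)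

open scoped Classical in
lemma exists_maxIndep_ext (G : SimpleGraph V) (A T : Finset V) (hTA : T ⊆ A)
    (hT : IsIndep G T) : ∃ U, T ⊆ U ∧ IsMaxIndepIn G A U := by
  obtain ⟨U, hU, hmax⟩ := Finset.exists_max_image
    ((A.powerset).filter (fun U => IsIndep G U ∧ T ⊆ U)) Finset.card
    ⟨T, by simp [hTA, hT]⟩
  simp only [mem_filter, mem_powerset] at hU
  refine ⟨U, hU.2.2, hU.1, hU.2.1, ?_⟩
  intro v hvA hvU hind
  have := hmax (insert v U) (by
    simp only [mem_filter, mem_powerset]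
    exact ⟨insert_subset hvA hU.1, hind, hU.2.2.trans (subset_insert _ _)⟩)
  rw [card_insert_of_notMem hvU] at this
  omega

/-- If `G` is well-covered and `S` is an independent set, then the localization `G_S`
is well-covered with `α(G_S) = α(G) - |S|`. -/
theorem stmt0 (G : SimpleGraph V) (hwc : WellCoveredIn G Finset.univ)
    (S : Finset V) (hS : IsIndep G S) :
    WellCoveredIn G (loc G S) ∧ alphaIn G (loc G S) = alphaIn G Finset.univ - S.card := by
  classical
  have hloc : ∀ v ∈ loc G S, v ∉ S ∧ ∀ u ∈ S, ¬ G.Adj u v := by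
    intro v hv
    simp only [loc, mem_sdiff, mem_union, nbrSet, mem_filter, mem_univ, true_and] at hv
    push_neg at hv
    exact ⟨hv.1, hv.2 hv.1⟩
  have key : ∀ T, IsMaxIndepIn G (loc G S) T → S.card + T.card = alphaIn G Finset.univ := by
    rintro T ⟨hTsub, hTind, hTmax⟩
    have hdisj : Disjoint S T := by
      rw [disjoint_right]; intro v hv; exact (hloc _ (hTsub hv)).1
    have hind : IsIndep G (S ∪ T) := by
      intro u hu v hv
      rcases mem_union.1 hu with hu | hu <;> rcases mem_union.1 hv with hv | hv
      · exact hS u hu v hv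
      · exact (hloc v (hTsub hv)).2 u hu
      · exact fun h => (hloc u (hTsub hu)).2 v hv h.symm
      · exact hTind u hu v hv
    have hmaxG : IsMaxIndepIn G Finset.univ (S ∪ T) := by
      refine ⟨subset_univ _, hind, ?_⟩
      intro v _ hv hind2
      have hvS : v ∉ S := fun h => hv (mem_union_left _ h)
      have hvT : v ∉ T := fun h => hv (mem_union_right _ h)
      have hvloc : v ∈ loc G S := by
        simp only [loc, mem_sdiff, mem_union, mem_univ, true_and, nbrSet, mem_filter]
        push_neg
        refine ⟨hvS, fun _ u hu hadj => ?_⟩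
        exact hind2 u (mem_insert_of_mem (mem_union_left _ hu)) v (mem_insert_self _ _) hadj
      exact hTmax v hvloc hvT
        (isIndep_mono G (insert_subset_insert _ subset_union_right) hind2)
    have hcard := hwc _ hmaxG
    rw [card_union_of_disjoint hdisj] at hcard
    exact hcard
  obtain ⟨T, -, hTmax⟩ := exists_maxIndep_ext G (loc G S) ∅ (empty_subset _)
    (fun u hu => by simp at hu)
  have hT := key T hTmax
  have hub : ∀ U, U ⊆ loc G S → IsIndep G U → U.card ≤ alphaIn G Finset.univ - S.card := by
    intro U hUsub hUind
    obtain ⟨W, hUW, hWmax⟩ := exists_maxIndep_ext G (loc G S) U hUsub hUind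
    have hW := key W hWmax
    have := card_le_card hUW
    omega
  have halpha : alphaIn G (loc G S) = alphaIn G Finset.univ - S.card := by
    apply le_antisymm
    · rw [alphaIn]
      apply Finset.sup_le
      intro U hU
      simp only [mem_filter, mem_powerset] at hU
      exact hub U hU.1 hU.2
    · have : T.card ≤ alphaIn G (loc G S) := by
        rw [alphaIn]
        exact Finset.le_sup (by simp only [mem_filter, mem_powerset]; exact ⟨hTmax.1, hTmax.2.1⟩)
      omega
  refine ⟨fun U hU => ?_, halpha⟩
  have := key U hU
  omega

end EdgeIdealPaper
end

section
/- If G is a graph such that for every vertex x the localization G_x is well-covered with α(G_x) = α(G) − 1, then G is well-covered. -/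
open Finset

section EdgeIdealPaper

variable {V : Type*} [Fintype V] [DecidableEq V]

/-- If `G_x` is well-covered with `α(G_x) = α(G) - 1` for all vertices `x`,
then `G` is well-covered. -/
theorem stmt1 (G : SimpleGraph V)
    (h : ∀ x : V, WellCoveredIn G (loc G {x}) ∧
      alphaIn G (loc G {x}) = alphaIn G Finset.univ - 1) :
    WellCoveredIn G Finset.univ := by
  classical
  intro S hS
  obtain ⟨hSsub, hSind, hSmax⟩ := hS
  have hle : ∀ T : Finset V, T ⊆ (univ : Finset V) → IsIndep G T →
      T.card ≤ alphaIn G univ := by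
    intro T hTsub hTind
    unfold alphaIn
    exact Finset.le_sup (by simp [Finset.mem_filter, Finset.mem_powerset, hTsub, hTind])
  rcases S.eq_empty_or_nonempty with rfl | ⟨x, hx⟩
  · -- S = ∅, so V must be empty
    have hV : ∀ v : V, False := by
      intro v
      refine hSmax v (mem_univ v) (notMem_empty v) ?_
      intro u hu w hw
      simp only [Finset.mem_insert, Finset.notMem_empty, or_false] at hu hw
      subst hu; subst hw
      exact fun hadj => G.loopless.irrefl _ hadj
    have : alphaIn G univ = 0 := by
      unfold alphaIn
      apply Nat.le_antisymm _ (Nat.zero_le _)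
      apply Finset.sup_le
      intro T hT
      simp only [Finset.mem_filter, Finset.mem_powerset] at hT
      have : T = ∅ := Finset.eq_empty_of_forall_notMem (fun v _ => hV v)
      simp [this]
    simp [this]
  · -- S nonempty, pick x ∈ S
    have hxS := hx
    set T := S.erase x with hT
    have hTsub : T ⊆ loc G {x} := by
      intro u hu
      obtain ⟨hux, huS⟩ := Finset.mem_erase.mp hu
      rw [loc, Finset.mem_sdiff]
      refine ⟨Finset.mem_univ u, ?_⟩
      intro hmem
      rcases Finset.mem_union.mp hmem with h | h
      · exact hux (Finset.mem_singleton.mp h)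
      · simp only [nbrSet, Finset.mem_filter, Finset.mem_singleton] at h
        obtain ⟨-, -, w, rfl, hadj⟩ := h
        exact hSind w hxS u huS hadj
    have hTind : IsIndep G T := fun u hu v hv =>
      hSind u (Finset.mem_of_mem_erase hu) v (Finset.mem_of_mem_erase hv)
    have hTmax : IsMaxIndepIn G (loc G {x}) T := by
      refine ⟨hTsub, hTind, ?_⟩
      intro v hv hvT hvind
      rw [loc, Finset.mem_sdiff] at hv
      have hvx : v ≠ x := fun h => hv.2 (Finset.mem_union_left _ (by simp [h]))
      have hnadj : ¬ G.Adj x v := by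
        intro hadj
        apply hv.2
        apply Finset.mem_union_right
        simp only [nbrSet, Finset.mem_filter, Finset.mem_univ, true_and, Finset.mem_singleton]
        exact ⟨hvx, x, rfl, hadj⟩
      have hvS : v ∉ S := by
        intro hvS
        exact hvT (Finset.mem_erase.mpr ⟨hvx, hvS⟩)
      refine hSmax v (mem_univ v) hvS ?_
      intro u hu w hw hadj
      rcases Finset.mem_insert.mp hu with rfl | huS <;>
        rcases Finset.mem_insert.mp hw with h | hwS
      · exact G.loopless.irrefl u (h ▸ hadj)
      · rcases eq_or_ne w x with rfl | hwx
        · exact hnadj hadj.symm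
        · exact hvind u (Finset.mem_insert_self _ _) w
            (Finset.mem_insert_of_mem (Finset.mem_erase.mpr ⟨hwx, hwS⟩)) hadj
      · subst h
        rcases eq_or_ne u x with rfl | hux
        · exact hnadj hadj
        · exact hvind u (Finset.mem_insert_of_mem (Finset.mem_erase.mpr ⟨hux, huS⟩)) w
            (Finset.mem_insert_self _ _) hadj
      · exact hSind u huS w hwS hadj
    have hcard : T.card = alphaIn G univ - 1 := by
      rw [(h x).1 T hTmax, (h x).2]
    have hScard : T.card + 1 = S.card := Finset.card_erase_add_one hxS
    have h1 : 1 ≤ alphaIn G univ := by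
      have := hle S hSsub hSind
      have hpos : 0 < S.card := Finset.card_pos.mpr ⟨x, hxS⟩
      omega
    omega

end EdgeIdealPaper
end

section
/- If G is a graph such that for every edge ab the graph G_{ab} (the induced subgraph on vertices not in N_G(a) ∪ N_G(b)) is well-covered with α(G_{ab}) = α(G) − 1, then G is well-covered. -/
open Finset

section EdgeIdealPaper

variable {V : Type*} [Fintype V] [DecidableEq V]

omit [Fintype V] [DecidableEq V] in
lemma indep_subset {G : SimpleGraph V} {S T : Finset V} (hST : S ⊆ T)
    (hT : IsIndep G T) : IsIndep G S :=
  fun u hu v hv => hT u (hST hu) v (hST hv)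

omit [Fintype V] [DecidableEq V] in
lemma card_le_alphaIn {G : SimpleGraph V} {S A : Finset V} (hSA : S ⊆ A)
    (hS : IsIndep G S) : S.card ≤ alphaIn G A := by
  classical
  unfold alphaIn
  apply Finset.le_sup
  rw [Finset.mem_filter, Finset.mem_powerset]
  exact ⟨hSA, hS⟩

/-- If `G_{ab}` is well-covered with `α(G_{ab}) = α(G) - 1` for all edges `ab`,
then `G` is well-covered. -/
theorem stmt2 (G : SimpleGraph V)
    (h : ∀ a b : V, G.Adj a b → WellCoveredIn G (locE G a b) ∧
      alphaIn G (locE G a b) = alphaIn G Finset.univ - 1) :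
    WellCoveredIn G Finset.univ := by
  classical
  rintro S ⟨-, hind, hmax⟩
  have hle : S.card ≤ alphaIn G Finset.univ := card_le_alphaIn (subset_univ S) hind
  -- every vertex outside S has a neighbor in S
  have hnb : ∀ v : V, v ∉ S → ∃ a ∈ S, G.Adj a v := by
    intro v hv
    have hni := hmax v (mem_univ v) hv
    rw [IsIndep] at hni
    push_neg at hni
    obtain ⟨x, hx, y, hy, hxy⟩ := hni
    rcases Finset.mem_insert.mp hx with rfl | hxS
    · rcases Finset.mem_insert.mp hy with rfl | hyS
      · exact absurd hxy (G.loopless.irrefl _)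
      · exact ⟨y, hyS, hxy.symm⟩
    · rcases Finset.mem_insert.mp hy with rfl | hyS
      · exact ⟨x, hxS, hxy⟩
      · exact absurd hxy (hind x hxS y hyS)
  by_cases hSuniv : S = Finset.univ
  · -- no vertex outside S; then every independent set is a subset of S
    subst hSuniv
    refine le_antisymm hle ?_
    unfold alphaIn
    apply Finset.sup_le
    intro T hT
    exact Finset.card_le_univ T
  · -- pick v outside S, so the set of "outside neighbors" is nonempty
    obtain ⟨v, hv⟩ : ∃ v, v ∉ S := by
      by_contra hc
      push_neg at hc
      exact hSuniv (Finset.eq_univ_iff_forall.mpr hc)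
    have hBne : (Finset.univ.filter (fun b => ∃ a ∈ S, G.Adj a b)).Nonempty :=
      ⟨v, by simpa using hnb v hv⟩
    obtain ⟨b, hbB, hbmin⟩ :=
      Finset.exists_min_image _ (fun b => (nbr G b ∩ S).card) hBne
    rw [Finset.mem_filter] at hbB
    obtain ⟨-, a, haS, hab⟩ := hbB
    have hbS : b ∉ S := fun hbS => hind a haS b hbS hab
    set A := locE G a b with hA
    -- membership in A
    have hmemA : ∀ x, x ∈ A ↔ ¬ G.Adj a x ∧ ¬ G.Adj b x := by
      intro x
      simp [hA, locE, nbr]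
    set S' := S ∩ A with hS'
    have hS'max : IsMaxIndepIn G A S' := by
      refine ⟨Finset.inter_subset_right, indep_subset Finset.inter_subset_left hind, ?_⟩
      intro w hwA hwS' hins
      have hwS : w ∉ S := fun hw => hwS' (Finset.mem_inter.mpr ⟨hw, hwA⟩)
      obtain ⟨u, huS, huw⟩ := hnb w hwS
      have hua : u ≠ a := by
        rintro rfl
        exact ((hmemA w).mp hwA).1 huw
      -- nbr w ∩ S ⊂ nbr b ∩ S
      have hsub : nbr G w ∩ S ⊆ nbr G b ∩ S := by
        intro x hx
        rw [Finset.mem_inter, nbr, Finset.mem_filter] at hx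
        obtain ⟨⟨-, hwx⟩, hxS⟩ := hx
        have hxS' : x ∉ S' := by
          intro hxS'
          exact hins w (Finset.mem_insert_self _ _) x (Finset.mem_insert_of_mem hxS') hwx
        have hxA : x ∉ A := fun hxA => hxS' (Finset.mem_inter.mpr ⟨hxS, hxA⟩)
        rw [hmemA] at hxA
        push_neg at hxA
        rw [Finset.mem_inter, nbr, Finset.mem_filter]
        refine ⟨⟨Finset.mem_univ _, ?_⟩, hxS⟩
        exact hxA (hind a haS x hxS)
      have haw : a ∉ nbr G w ∩ S := by
        rw [Finset.mem_inter, nbr, Finset.mem_filter]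
        rintro ⟨⟨-, hwa⟩, -⟩
        exact ((hmemA w).mp hwA).1 hwa.symm
      have hab' : a ∈ nbr G b ∩ S := by
        rw [Finset.mem_inter, nbr, Finset.mem_filter]
        exact ⟨⟨Finset.mem_univ _, hab.symm⟩, haS⟩
      have hlt : (nbr G w ∩ S).card < (nbr G b ∩ S).card :=
        Finset.card_lt_card ⟨hsub, fun hc => haw (hc hab')⟩
      have : (nbr G b ∩ S).card ≤ (nbr G w ∩ S).card :=
        hbmin w (Finset.mem_filter.mpr ⟨Finset.mem_univ _, u, huS, huw⟩)
      omega
    obtain ⟨hwc, halpha⟩ := h a b hab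
    have hcardS' : S'.card = alphaIn G Finset.univ - 1 := (hwc S' hS'max).trans halpha
    -- a ∈ S \ A
    have haA : a ∉ A := by
      rw [hmemA]
      push_neg
      intro
      exact hab.symm
    have hsplit : S'.card + (S \ A).card = S.card := Finset.card_inter_add_card_sdiff S A
    have hone : 1 ≤ (S \ A).card :=
      Finset.card_pos.mpr ⟨a, Finset.mem_sdiff.mpr ⟨haS, haA⟩⟩
    have halpha1 : 1 ≤ alphaIn G Finset.univ := by
      have : ({a} : Finset V).card ≤ alphaIn G Finset.univ := by
        apply card_le_alphaIn (Finset.subset_univ _)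
        intro x hx y hy
        rw [Finset.mem_singleton] at hx hy
        subst hx; subst hy
        exact G.loopless.irrefl _
      simpa using this
    omega

end EdgeIdealPaper
end

section
/- Let G be a triangle-free graph in the class W₂ with α(G) ≥ 2, and let ab be an edge of G. Then α(G \ ab) = α(G) + 1, where G \ ab is the graph obtained from G by deleting the edge ab (keeping all vertices). In particular every edge of G is α-critical. -/
open Finset

section EdgeIdealPaper

variable {V : Type*} [Fintype V] [DecidableEq V]

open scoped Classical in
lemma indep_card_le_alphaIn (G : SimpleGraph V) {A S : Finset V}
    (hS : S ⊆ A) (h : IsIndep G S) : S.card ≤ alphaIn G A := by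
  apply Finset.le_sup
  simp only [Finset.mem_filter, Finset.mem_powerset]
  exact ⟨hS, h⟩

open scoped Classical in
lemma exists_alphaIn (G : SimpleGraph V) (A : Finset V) :
    ∃ S ⊆ A, IsIndep G S ∧ S.card = alphaIn G A := by
  have hne : ((A.powerset).filter (fun S => IsIndep G S)).Nonempty := by
    refine ⟨∅, ?_⟩
    simp only [Finset.mem_filter, Finset.mem_powerset]
    exact ⟨Finset.empty_subset _, fun u hu => by simp at hu⟩
  obtain ⟨S, hS, hcard⟩ := Finset.exists_mem_eq_sup _ hne Finset.card
  simp only [Finset.mem_filter, Finset.mem_powerset] at hS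
  exact ⟨S, hS.1, hS.2, hcard.symm⟩

open scoped Classical in
lemma exists_extend_maximal (G : SimpleGraph V) {A S : Finset V}
    (hS : S ⊆ A) (h : IsIndep G S) :
    ∃ T, S ⊆ T ∧ IsMaxIndepIn G A T := by
  have hne : ((A.powerset).filter (fun T => S ⊆ T ∧ IsIndep G T)).Nonempty := by
    refine ⟨S, ?_⟩
    simp only [Finset.mem_filter, Finset.mem_powerset]
    exact ⟨hS, subset_refl _, h⟩
  obtain ⟨T, hT, hTmax⟩ := Finset.exists_max_image _ Finset.card hne
  simp only [Finset.mem_filter, Finset.mem_powerset] at hT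
  refine ⟨T, hT.2.1, hT.1, hT.2.2, fun v hvA hvT hind => ?_⟩
  have hmem : insert v T ∈ (A.powerset).filter (fun T => S ⊆ T ∧ IsIndep G T) := by
    simp only [Finset.mem_filter, Finset.mem_powerset]
    exact ⟨Finset.insert_subset hvA hT.1, hT.2.1.trans (Finset.subset_insert _ _), hind⟩
  have := hTmax _ hmem
  rw [Finset.card_insert_of_notMem hvT] at this
  omega

/-- For a triangle-free graph in `W₂` with `α(G) ≥ 2`, deleting any edge `ab`
increases the independence number by exactly one; in particular every edge is
`α`-critical. -/
theorem stmt3 (G : SimpleGraph V) (htf : G.CliqueFree 3)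
    (hw2 : W2In G Finset.univ) (hα : 2 ≤ alphaIn G Finset.univ)
    (a b : V) (hab : G.Adj a b) :
    alphaIn (G.deleteEdges {s(a, b)}) Finset.univ = alphaIn G Finset.univ + 1 ∧
      alphaIn G Finset.univ < alphaIn (G.deleteEdges {s(a, b)}) Finset.univ := by
  classical
  set α := alphaIn G Finset.univ with hαdef
  set G' := G.deleteEdges {s(a, b)} with hG'def
  -- the family of maximum independent sets containing `a`
  set F : Finset (Finset V) :=
    (Finset.univ.powerset.filter (fun S => IsIndep G S ∧ a ∈ S ∧ S.card = α)) with hFdef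
  have hFne : F.Nonempty := by
    have haind : IsIndep G ({a} : Finset V) := by
      intro u hu v hv
      simp only [Finset.mem_singleton] at hu hv
      subst hu; subst hv; exact G.irrefl
    obtain ⟨T, hST, hTmax⟩ := exists_extend_maximal G (Finset.subset_univ {a}) haind
    refine ⟨T, ?_⟩
    simp only [hFdef, Finset.mem_filter, Finset.mem_powerset]
    exact ⟨Finset.subset_univ _, hTmax.2.1, hST (Finset.mem_singleton_self a),
      hw2.1 T hTmax⟩
  obtain ⟨S, hSF, hSmin⟩ := F.exists_min_image (fun S => (S ∩ nbr G b).card) hFne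
  simp only [hFdef, Finset.mem_filter, Finset.mem_powerset] at hSF
  obtain ⟨-, hSind, haS, hScard⟩ := hSF
  -- key claim: every vertex of `S` adjacent to `b` equals `a`
  have hkey : ∀ c ∈ S ∩ nbr G b, c = a := by
    intro c hc
    by_contra hca
    have hcS : c ∈ S := (Finset.mem_inter.1 hc).1
    have hbc : G.Adj b c := by
      have := (Finset.mem_inter.1 hc).2
      rw [nbr, Finset.mem_filter] at this
      exact this.2
    obtain ⟨hwc, hαc⟩ := hw2.2 c (Finset.mem_univ c)
    have hSc_sub : S.erase c ⊆ Finset.univ.erase c :=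
      Finset.erase_subset_erase _ (Finset.subset_univ S)
    have hSc_ind : IsIndep G (S.erase c) := fun u hu v hv =>
      hSind u (Finset.mem_of_mem_erase hu) v (Finset.mem_of_mem_erase hv)
    obtain ⟨S', hsub, hS'max⟩ := exists_extend_maximal G hSc_sub hSc_ind
    have hS'card : S'.card = α := by rw [hwc S' hS'max, hαc]
    have hS'ind : IsIndep G S' := hS'max.2.1
    have hcS' : c ∉ S' := fun h => (Finset.mem_erase.1 (hS'max.1 h)).1 rfl
    have hSpos : 0 < S.card := Finset.card_pos.2 ⟨c, hcS⟩
    have h1 : (S' \ S.erase c).card = 1 := by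
      rw [Finset.card_sdiff_of_subset hsub, hS'card, Finset.card_erase_of_mem hcS, hScard]
      omega
    obtain ⟨v, hveq⟩ := Finset.card_eq_one.1 h1
    have hvS' : v ∈ S' := by
      have : v ∈ S' \ S.erase c := hveq ▸ Finset.mem_singleton_self v
      exact (Finset.mem_sdiff.1 this).1
    have hvSe : v ∉ S.erase c := by
      have : v ∈ S' \ S.erase c := hveq ▸ Finset.mem_singleton_self v
      exact (Finset.mem_sdiff.1 this).2
    have hvc : v ≠ c := fun h => hcS' (h ▸ hvS')
    have hvS : v ∉ S := fun h => hvSe (Finset.mem_erase.2 ⟨hvc, h⟩)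
    have hS'eq : S' = insert v (S.erase c) := by
      apply Finset.Subset.antisymm
      · intro x hx
        by_cases hxe : x ∈ S.erase c
        · exact Finset.mem_insert_of_mem hxe
        · have : x ∈ S' \ S.erase c := Finset.mem_sdiff.2 ⟨hx, hxe⟩
          rw [hveq, Finset.mem_singleton] at this
          exact this ▸ Finset.mem_insert_self _ _
      · exact Finset.insert_subset hvS' hsub
    -- v is adjacent to c
    have hcv : G.Adj c v := by
      by_contra hnadj
      have hind : IsIndep G (insert v S) := by
        intro u hu w hw
        rcases Finset.mem_insert.1 hu with rfl | hu' <;>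
          rcases Finset.mem_insert.1 hw with rfl | hw'
        · exact G.irrefl
        · by_cases hwc2 : w = c
          · subst hwc2; exact fun h => hnadj h.symm
          · exact hS'ind u hvS' w (hsub (Finset.mem_erase.2 ⟨hwc2, hw'⟩))
        · by_cases huc2 : u = c
          · subst huc2; exact hnadj
          · exact hS'ind u (hsub (Finset.mem_erase.2 ⟨huc2, hu'⟩)) w hvS'
        · exact hSind u hu' w hw'
      have hle := indep_card_le_alphaIn G (Finset.subset_univ _) hind
      rw [Finset.card_insert_of_notMem hvS, hScard] at hle
      omega
    -- v is not a neighbor of b (else triangle b, c, v)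
    have hvnb : v ∉ nbr G b := by
      intro hvb
      have hbv : G.Adj b v := by
        rw [nbr, Finset.mem_filter] at hvb
        exact hvb.2
      exact htf {b, c, v} (SimpleGraph.is3Clique_iff.2 ⟨b, c, v, hbc, hbv, hcv, rfl⟩)
    -- S' is a maximum independent set containing a
    have haS' : a ∈ S' := hsub (Finset.mem_erase.2 ⟨fun h => hca h.symm, haS⟩)
    have hS'F : S' ∈ F := by
      simp only [hFdef, Finset.mem_filter, Finset.mem_powerset]
      exact ⟨Finset.subset_univ _, hS'ind, haS', hS'card⟩
    -- but S' has a strictly smaller intersection with nbr G b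
    have hsubint : S' ∩ nbr G b ⊆ (S ∩ nbr G b).erase c := by
      intro x hx
      obtain ⟨hx1, hx2⟩ := Finset.mem_inter.1 hx
      rw [hS'eq] at hx1
      rcases Finset.mem_insert.1 hx1 with rfl | hx1'
      · exact absurd hx2 hvnb
      · obtain ⟨hxc, hxS⟩ := Finset.mem_erase.1 hx1'
        exact Finset.mem_erase.2 ⟨hxc, Finset.mem_inter.2 ⟨hxS, hx2⟩⟩
    have hlt : (S' ∩ nbr G b).card < (S ∩ nbr G b).card := by
      calc (S' ∩ nbr G b).card ≤ ((S ∩ nbr G b).erase c).card :=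
            Finset.card_le_card hsubint
        _ < (S ∩ nbr G b).card := Finset.card_erase_lt_of_mem hc
    exact absurd (hSmin S' hS'F) (by omega)
  have haSb : a ∈ S ∩ nbr G b := by
    refine Finset.mem_inter.2 ⟨haS, ?_⟩
    rw [nbr, Finset.mem_filter]
    exact ⟨Finset.mem_univ a, hab.symm⟩
  have hbS : b ∉ S := fun h => hSind a haS b h hab
  -- insert b S is independent in G'
  have hWind : IsIndep G' (insert b S) := by
    intro u hu w hw hadj
    rw [hG'def, SimpleGraph.deleteEdges_adj] at hadj
    obtain ⟨hG, hs⟩ := hadj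
    rcases Finset.mem_insert.1 hu with rfl | hu' <;>
      rcases Finset.mem_insert.1 hw with rfl | hw'
    · exact G.irrefl hG
    · have : w = a := hkey w (Finset.mem_inter.2 ⟨hw', by
        rw [nbr, Finset.mem_filter]; exact ⟨Finset.mem_univ w, hG⟩⟩)
      subst this
      exact hs (by rw [Sym2.eq_swap]; rfl)
    · have : u = a := hkey u (Finset.mem_inter.2 ⟨hu', by
        rw [nbr, Finset.mem_filter]; exact ⟨Finset.mem_univ u, hG.symm⟩⟩)
      subst this
      exact hs rfl
    · exact hSind u hu' w hw' hG
  have hbS' : b ∉ insert b S → False := fun h => h (Finset.mem_insert_self b S)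
  have hlow : α + 1 ≤ alphaIn G' Finset.univ := by
    have := indep_card_le_alphaIn G' (Finset.subset_univ (insert b S)) hWind
    rwa [Finset.card_insert_of_notMem hbS, hScard] at this
  have hup : alphaIn G' Finset.univ ≤ α + 1 := by
    obtain ⟨W, hWsub, hWind', hWcard⟩ := exists_alphaIn G' Finset.univ
    have herind : IsIndep G (W.erase a) := by
      intro u hu w hw hadj
      obtain ⟨hua, huW⟩ := Finset.mem_erase.1 hu
      obtain ⟨hwa, hwW⟩ := Finset.mem_erase.1 hw
      apply hWind' u huW w hwW
      rw [hG'def, SimpleGraph.deleteEdges_adj]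
      refine ⟨hadj, fun h => ?_⟩
      rw [Set.mem_singleton_iff, Sym2.eq_iff] at h
      rcases h with ⟨h1, _⟩ | ⟨_, h2⟩
      · exact hua h1
      · exact hwa h2
    have hle := indep_card_le_alphaIn G (Finset.subset_univ _) herind
    have hWle : W.card ≤ (W.erase a).card + 1 := by
      by_cases haW : a ∈ W
      · rw [Finset.card_erase_of_mem haW]; omega
      · rw [Finset.erase_eq_of_notMem haW]; omega
    omega
  constructor
  · omega
  · omega

end EdgeIdealPaper
end

section
/- Let G be a triangle-free graph without isolated vertices. Then G is in W₂ if and only if for every edge ab of G, the graph G_{ab} = G \ (N_G(a) ∪ N_G(b)) is well-covered with α(G_{ab}) = α(G) − 1. -/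
open Finset

section EdgeIdealPaper

variable {V : Type*} [Fintype V] [DecidableEq V]

section EdgeIdealAux

variable {V : Type*} [Fintype V] [DecidableEq V]

lemma aux_indep_subset (G : SimpleGraph V) {S T : Finset V} (h : S ⊆ T)
    (hT : IsIndep G T) : IsIndep G S :=
  fun u hu v hv => hT u (h hu) v (h hv)

lemma aux_indep_empty (G : SimpleGraph V) : IsIndep G (∅ : Finset V) := by
  intro u hu; simp at hu

lemma aux_indep_insert (G : SimpleGraph V) {T : Finset V} {v : V} (hT : IsIndep G T)
    (h : ∀ u ∈ T, ¬ G.Adj u v) : IsIndep G (insert v T) := by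
  intro c hc d hd
  rcases Finset.mem_insert.mp hc with hcv | hcT
  · rcases Finset.mem_insert.mp hd with hdv | hdT
    · rw [hcv, hdv]; exact G.irrefl
    · rw [hcv]; exact fun hadj => h d hdT hadj.symm
  · rcases Finset.mem_insert.mp hd with hdv | hdT
    · rw [hdv]; exact h c hcT
    · exact hT c hcT d hdT

lemma aux_card_le_alphaIn (G : SimpleGraph V) {S A : Finset V} (hSA : S ⊆ A)
    (hS : IsIndep G S) : S.card ≤ alphaIn G A := by
  classical
  unfold alphaIn
  refine Finset.le_sup ?_
  simp only [Finset.mem_filter, Finset.mem_powerset]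
  exact ⟨hSA, hS⟩

lemma aux_exists_alphaIn (G : SimpleGraph V) (A : Finset V) :
    ∃ S, S ⊆ A ∧ IsIndep G S ∧ S.card = alphaIn G A := by
  classical
  unfold alphaIn
  have hne : ((A.powerset).filter (fun S => IsIndep G S)).Nonempty :=
    ⟨∅, by simp [aux_indep_empty]⟩
  obtain ⟨S, hS, hSc⟩ := Finset.exists_mem_eq_sup _ hne Finset.card
  rw [Finset.mem_filter, Finset.mem_powerset] at hS
  exact ⟨S, hS.1, hS.2, hSc.symm⟩

lemma aux_exists_max_extension (G : SimpleGraph V) {S A : Finset V} (hSA : S ⊆ A)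
    (hS : IsIndep G S) : ∃ T, S ⊆ T ∧ IsMaxIndepIn G A T := by
  classical
  have hne : ((A.powerset).filter (fun T => S ⊆ T ∧ IsIndep G T)).Nonempty :=
    ⟨S, by simp only [Finset.mem_filter, Finset.mem_powerset]; exact ⟨hSA, Finset.Subset.refl S, hS⟩⟩
  obtain ⟨T, hT, hmax⟩ := Finset.exists_max_image _ Finset.card hne
  rw [Finset.mem_filter, Finset.mem_powerset] at hT
  refine ⟨T, hT.2.1, hT.1, hT.2.2, ?_⟩
  intro v hvA hvT hind
  have hmem : insert v T ∈ (A.powerset).filter (fun T => S ⊆ T ∧ IsIndep G T) := by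
    rw [Finset.mem_filter, Finset.mem_powerset]
    exact ⟨Finset.insert_subset hvA hT.1, hT.2.1.trans (Finset.subset_insert _ _), hind⟩
  have hle := hmax _ hmem
  rw [Finset.card_insert_of_notMem hvT] at hle
  omega

lemma aux_maxIndep_adj (G : SimpleGraph V) {A T : Finset V} (hT : IsMaxIndepIn G A T) {v : V}
    (hvA : v ∈ A) (hvT : v ∉ T) : ∃ u ∈ T, G.Adj u v := by
  by_contra hno
  push_neg at hno
  exact hT.2.2 v hvA hvT (aux_indep_insert G hT.2.1 hno)

lemma aux_mem_nbr (G : SimpleGraph V) {a v : V} : v ∈ nbr G a ↔ G.Adj a v := by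
  classical
  simp [nbr]

lemma aux_mem_locE (G : SimpleGraph V) {a b v : V} :
    v ∈ locE G a b ↔ ¬ G.Adj a v ∧ ¬ G.Adj b v := by
  classical
  simp [locE, nbr]

lemma aux_alpha_pos (G : SimpleGraph V) (v : V) : 1 ≤ alphaIn G (univ : Finset V) := by
  have h1 : IsIndep G ({v} : Finset V) := by
    intro a ha b hb
    simp only [Finset.mem_singleton] at ha hb
    subst ha; subst hb; exact G.irrefl
  have := aux_card_le_alphaIn G (Finset.subset_univ {v}) h1
  simpa using this

lemma aux_H_card (G : SimpleGraph V)
    (H : ∀ a b : V, G.Adj a b → WellCoveredIn G (locE G a b) ∧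
      alphaIn G (locE G a b) = alphaIn G Finset.univ - 1)
    {a b : V} (hab : G.Adj a b) {T : Finset V}
    (hT : IsMaxIndepIn G (locE G a b) T) : T.card + 1 = alphaIn G (univ : Finset V) := by
  have h1 := (H a b hab).1 T hT
  have h2 := (H a b hab).2
  have h3 := aux_alpha_pos G a
  omega

lemma aux_wellcov_univ (G : SimpleGraph V)
    (H : ∀ a b : V, G.Adj a b → WellCoveredIn G (locE G a b) ∧
      alphaIn G (locE G a b) = alphaIn G Finset.univ - 1) :
    WellCoveredIn G (univ : Finset V) := by
  classical
  intro M hM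
  set Big := ((univ : Finset V).powerset).filter
    (fun S => IsIndep G S ∧ S.card = alphaIn G (univ : Finset V)) with hBigDef
  have hne : Big.Nonempty := by
    obtain ⟨S, hS1, hS2, hS3⟩ := aux_exists_alphaIn G (univ : Finset V)
    exact ⟨S, by rw [hBigDef, Finset.mem_filter, Finset.mem_powerset]; exact ⟨hS1, hS2, hS3⟩⟩
  obtain ⟨W, hWBig, hWmax⟩ := Finset.exists_max_image Big (fun S => (M ∩ S).card) hne
  rw [hBigDef, Finset.mem_filter, Finset.mem_powerset] at hWBig
  obtain ⟨-, hWindep, hWcard⟩ := hWBig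
  by_cases hMW : M \ W = ∅
  · have hMsubW : M ⊆ W := Finset.sdiff_eq_empty_iff_subset.mp hMW
    have hWsubM : W ⊆ M := by
      intro v hv
      by_contra hvM
      exact hM.2.2 v (Finset.mem_univ v) hvM
        (aux_indep_subset G (Finset.insert_subset hv hMsubW) hWindep)
    rw [Finset.Subset.antisymm hMsubW hWsubM]
    exact hWcard
  · obtain ⟨u, hu⟩ := Finset.nonempty_iff_ne_empty.mpr hMW
    rw [Finset.mem_sdiff] at hu
    obtain ⟨huM, huW⟩ := hu
    have hexw : ∃ w ∈ W, G.Adj u w := by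
      by_contra hno
      push_neg at hno
      have hins : IsIndep G (insert u W) :=
        aux_indep_insert G hWindep (fun m hm hadj => hno m hm hadj.symm)
      have hle := aux_card_le_alphaIn G (Finset.subset_univ _) hins
      rw [Finset.card_insert_of_notMem huW] at hle
      omega
    obtain ⟨w, hwW, huw⟩ := hexw
    have hAlocE : W \ nbr G u ⊆ locE G u w := by
      intro m hm
      rw [Finset.mem_sdiff] at hm
      rw [aux_mem_locE]
      refine ⟨fun h => hm.2 ((aux_mem_nbr G).mpr h), fun hwm => ?_⟩
      exact hWindep w hwW m hm.1 hwm
    have hAindep : IsIndep G (W \ nbr G u) :=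
      aux_indep_subset G (Finset.sdiff_subset) hWindep
    obtain ⟨A', hAA', hA'max⟩ := aux_exists_max_extension G hAlocE hAindep
    have hA'card := aux_H_card G H huw hA'max
    have huA' : u ∉ A' := fun h => ((aux_mem_locE G).mp (hA'max.1 h)).2 huw.symm
    have hins : IsIndep G (insert u A') :=
      aux_indep_insert G hA'max.2.1
        (fun m hm hadj => ((aux_mem_locE G).mp (hA'max.1 hm)).1 hadj.symm)
    have hBigmem : insert u A' ∈ Big := by
      rw [hBigDef, Finset.mem_filter, Finset.mem_powerset]
      refine ⟨Finset.subset_univ _, hins, ?_⟩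
      rw [Finset.card_insert_of_notMem huA']
      omega
    have hle := hWmax _ hBigmem
    have hsub : M ∩ W ⊆ M ∩ insert u A' := by
      intro m hm
      rw [Finset.mem_inter] at hm ⊢
      refine ⟨hm.1, Finset.mem_insert_of_mem (hAA' ?_)⟩
      rw [Finset.mem_sdiff]
      exact ⟨hm.2, fun hnb => hM.2.1 u huM m hm.1 ((aux_mem_nbr G).mp hnb)⟩
    have heq := Finset.eq_of_subset_of_card_le hsub hle
    have humem : u ∈ M ∩ W := by
      rw [heq]
      exact Finset.mem_inter.mpr ⟨huM, Finset.mem_insert_self u A'⟩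
    exact absurd (Finset.mem_inter.mp humem).2 huW

lemma aux_erase (G : SimpleGraph V)
    (H : ∀ a b : V, G.Adj a b → WellCoveredIn G (locE G a b) ∧
      alphaIn G (locE G a b) = alphaIn G Finset.univ - 1)
    (hni : ∀ v : V, ∃ u : V, G.Adj v u) (x : V) :
    WellCoveredIn G ((univ : Finset V).erase x) ∧
      alphaIn G ((univ : Finset V).erase x) = alphaIn G (univ : Finset V) := by
  classical
  obtain ⟨y, hxy⟩ := hni x
  obtain ⟨T, -, hTmax⟩ := aux_exists_max_extension G
    (Finset.empty_subset (locE G x y)) (aux_indep_empty G)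
  have hTcard := aux_H_card G H hxy hTmax
  have hyT : y ∉ T := fun h => ((aux_mem_locE G).mp (hTmax.1 h)).1 hxy
  have hS0indep : IsIndep G (insert y T) :=
    aux_indep_insert G hTmax.2.1
      (fun m hm hadj => ((aux_mem_locE G).mp (hTmax.1 hm)).2 hadj.symm)
  have hS0sub : insert y T ⊆ (univ : Finset V).erase x := by
    intro m hm
    rw [Finset.mem_erase]
    refine ⟨?_, Finset.mem_univ m⟩
    rcases Finset.mem_insert.mp hm with rfl | hm
    · exact fun h => hxy.ne h.symm
    · intro h
      subst h
      exact ((aux_mem_locE G).mp (hTmax.1 hm)).2 hxy.symm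
  have hS0card : (insert y T).card + 0 = alphaIn G (univ : Finset V) := by
    rw [Finset.card_insert_of_notMem hyT]
    omega
  have halpha_erase : alphaIn G ((univ : Finset V).erase x) = alphaIn G (univ : Finset V) := by
    refine le_antisymm ?_ ?_
    · obtain ⟨S, hS1, hS2, hS3⟩ := aux_exists_alphaIn G ((univ : Finset V).erase x)
      rw [← hS3]
      exact aux_card_le_alphaIn G (Finset.subset_univ S) hS2
    · have := aux_card_le_alphaIn G hS0sub hS0indep
      omega
  refine ⟨?_, halpha_erase⟩
  intro M hM
  rw [halpha_erase]
  by_cases hxM : IsIndep G (insert x M)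
  case neg =>
    have hMuniv : IsMaxIndepIn G (univ : Finset V) M := by
      refine ⟨Finset.subset_univ _, hM.2.1, ?_⟩
      intro v _ hvM hind
      by_cases hvx : v = x
      · subst hvx; exact hxM hind
      · exact hM.2.2 v (Finset.mem_erase.mpr ⟨hvx, Finset.mem_univ v⟩) hvM hind
    exact aux_wellcov_univ G H M hMuniv
  case pos =>
    exfalso
    have badMax : ∀ N, IsMaxIndepIn G ((univ : Finset V).erase x) N →
        IsIndep G (insert x N) → IsMaxIndepIn G (univ : Finset V) (insert x N) := by
      intro N hN hxN
      refine ⟨Finset.subset_univ _, hxN, ?_⟩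
      intro v _ hvN hind
      have hvx : v ≠ x := fun h => hvN (h ▸ Finset.mem_insert_self x N)
      have hind' : IsIndep G (insert v N) :=
        aux_indep_subset G (Finset.insert_subset_insert _ (Finset.subset_insert _ _)) hind
      exact hN.2.2 v (Finset.mem_erase.mpr ⟨hvx, Finset.mem_univ v⟩)
        (fun h => hvN (Finset.mem_insert_of_mem h)) hind'
    have badCard : ∀ N, IsMaxIndepIn G ((univ : Finset V).erase x) N →
        IsIndep G (insert x N) → N.card + 1 = alphaIn G (univ : Finset V) := by
      intro N hN hxN
      have h1 := aux_wellcov_univ G H _ (badMax N hN hxN)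
      have hxN' : x ∉ N := fun h => (Finset.mem_erase.mp (hN.1 h)).1 rfl
      rw [Finset.card_insert_of_notMem hxN'] at h1
      exact h1
    set Bad := (((univ : Finset V).erase x).powerset).filter
      (fun N => IsMaxIndepIn G ((univ : Finset V).erase x) N ∧ IsIndep G (insert x N))
      with hBadDef
    set Big := (((univ : Finset V).erase x).powerset).filter
      (fun S => IsIndep G S ∧ S.card = alphaIn G (univ : Finset V)) with hBigDef
    have hMBad : M ∈ Bad := by
      rw [hBadDef, Finset.mem_filter, Finset.mem_powerset]
      exact ⟨hM.1, hM, hxM⟩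
    have hS0Big : insert y T ∈ Big := by
      rw [hBigDef, Finset.mem_filter, Finset.mem_powerset]
      exact ⟨hS0sub, hS0indep, by omega⟩
    obtain ⟨p, hpmem, hpmax⟩ := Finset.exists_max_image (Bad ×ˢ Big)
      (fun p => (p.1 ∩ p.2).card)
      ⟨(M, insert y T), Finset.mem_product.mpr ⟨hMBad, hS0Big⟩⟩
    obtain ⟨N, W⟩ := p
    rw [Finset.mem_product] at hpmem
    obtain ⟨hNBadmem, hWBigmem⟩ := hpmem
    have hNBadmem : N ∈ Bad := hNBadmem
    have hWBigmem : W ∈ Big := hWBigmem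
    have hpmax : ∀ q ∈ Bad ×ˢ Big, ((q : Finset V × Finset V).1 ∩ q.2).card ≤ (N ∩ W).card :=
      fun q hq => hpmax q hq
    have hNfacts := hNBadmem
    rw [hBadDef, Finset.mem_filter, Finset.mem_powerset] at hNfacts
    obtain ⟨hNsub, hNmax, hNx⟩ := hNfacts
    have hWfacts := hWBigmem
    rw [hBigDef, Finset.mem_filter, Finset.mem_powerset] at hWfacts
    obtain ⟨hWsub, hWindep, hWcard⟩ := hWfacts
    have hNcard : N.card + 1 = alphaIn G (univ : Finset V) := badCard N hNmax hNx
    have hNW : (N \ W).Nonempty := by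
      by_contra h
      rw [Finset.not_nonempty_iff_eq_empty, Finset.sdiff_eq_empty_iff_subset] at h
      have hpos : 0 < (W \ N).card := by
        rw [Finset.card_sdiff_of_subset h]
        omega
      obtain ⟨v, hv⟩ := Finset.card_pos.mp hpos
      rw [Finset.mem_sdiff] at hv
      exact hNmax.2.2 v (hWsub hv.1) hv.2
        (aux_indep_subset G (Finset.insert_subset hv.1 h) hWindep)
    obtain ⟨u, hu⟩ := hNW
    rw [Finset.mem_sdiff] at hu
    obtain ⟨huN, huW⟩ := hu
    have hux : ¬ G.Adj u x :=
      fun h => hNx u (Finset.mem_insert_of_mem huN) x (Finset.mem_insert_self _ _) h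
    have hu_ne_x : u ≠ x := fun h => (Finset.mem_erase.mp (hNsub huN)).1 h
    have hexw : ∃ w ∈ W, G.Adj u w := by
      by_contra hno
      push_neg at hno
      have hins : IsIndep G (insert u W) :=
        aux_indep_insert G hWindep (fun m hm hadj => hno m hm hadj.symm)
      have hle := aux_card_le_alphaIn G (Finset.subset_univ _) hins
      rw [Finset.card_insert_of_notMem huW] at hle
      omega
    have key : ∀ w ∈ W, G.Adj u w → (¬ G.Adj w x ∧ W \ nbr G u ⊆ N) := by
      intro w hwW huw
      have hMWA : N ∩ W ⊆ W \ nbr G u := by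
        intro m hm
        rw [Finset.mem_inter] at hm
        rw [Finset.mem_sdiff]
        exact ⟨hm.2, fun hnb => hNmax.2.1 u huN m hm.1 ((aux_mem_nbr G).mp hnb)⟩
      have hAindep : IsIndep G (W \ nbr G u) :=
        aux_indep_subset G (Finset.sdiff_subset) hWindep
      have hAx : x ∉ W \ nbr G u := by
        intro h
        exact (Finset.mem_erase.mp (hWsub (Finset.sdiff_subset h))).1 rfl
      have hAlocE : W \ nbr G u ⊆ locE G u w := by
        intro m hm
        rw [Finset.mem_sdiff] at hm
        rw [aux_mem_locE]
        exact ⟨fun h => hm.2 ((aux_mem_nbr G).mpr h), fun hwm => hWindep w hwW m hm.1 hwm⟩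
      have hAD : W \ nbr G u ⊆ (locE G u w).erase x := fun m hm =>
        Finset.mem_erase.mpr ⟨fun h => hAx (h ▸ hm), hAlocE hm⟩
      obtain ⟨A', hAA', hA'max⟩ := aux_exists_max_extension G hAD hAindep
      have hA'locE : A' ⊆ locE G u w := hA'max.1.trans (Finset.erase_subset _ _)
      have hA'x : x ∉ A' := fun h => (Finset.mem_erase.mp (hA'max.1 h)).1 rfl
      have huA' : u ∉ A' := fun h => ((aux_mem_locE G).mp (hA'locE h)).2 huw.symm
      have hNWsubA' : N ∩ W ⊆ A' := hMWA.trans hAA'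
      have hBindep : IsIndep G (insert u A') :=
        aux_indep_insert G hA'max.2.1
          (fun m hm hadj => ((aux_mem_locE G).mp (hA'locE hm)).1 hadj.symm)
      have hBsub : insert u A' ⊆ (univ : Finset V).erase x := by
        intro m hm
        rcases Finset.mem_insert.mp hm with rfl | hm
        · exact Finset.mem_erase.mpr ⟨hu_ne_x, Finset.mem_univ _⟩
        · exact Finset.mem_erase.mpr ⟨fun h => hA'x (h ▸ hm), Finset.mem_univ _⟩
      by_cases hI : IsMaxIndepIn G (locE G u w) A'
      · exfalso
        have hc := aux_H_card G H huw hI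
        have hBigmem : insert u A' ∈ Big := by
          rw [hBigDef, Finset.mem_filter, Finset.mem_powerset]
          refine ⟨hBsub, hBindep, ?_⟩
          rw [Finset.card_insert_of_notMem huA']
          omega
        have hle : (N ∩ insert u A').card ≤ (N ∩ W).card :=
          hpmax (N, insert u A') (Finset.mem_product.mpr ⟨hNBadmem, hBigmem⟩)
        have hsub2 : insert u (N ∩ W) ⊆ N ∩ insert u A' := by
          intro m hm
          rcases Finset.mem_insert.mp hm with rfl | hm
          · exact Finset.mem_inter.mpr ⟨huN, Finset.mem_insert_self _ _⟩
          · exact Finset.mem_inter.mpr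
              ⟨(Finset.mem_inter.mp hm).1, Finset.mem_insert_of_mem (hNWsubA' hm)⟩
        have hcard2 := Finset.card_le_card hsub2
        rw [Finset.card_insert_of_notMem (fun h => huW (Finset.mem_inter.mp h).2)] at hcard2
        omega
      · have hexv : ∃ v ∈ locE G u w, v ∉ A' ∧ IsIndep G (insert v A') := by
          by_contra hno
          push_neg at hno
          exact hI ⟨hA'locE, hA'max.2.1, fun v hv hv2 => hno v hv hv2⟩
        obtain ⟨v, hvlocE, hvA', hvind⟩ := hexv
        have hvx : v = x := by
          by_contra hne
          exact hA'max.2.2 v (Finset.mem_erase.mpr ⟨hne, hvlocE⟩) hvA' hvind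
        subst hvx
        have hwx : ¬ G.Adj w v := ((aux_mem_locE G).mp hvlocE).2
        have hxA'max : IsMaxIndepIn G (locE G u w) (insert v A') := by
          refine ⟨Finset.insert_subset hvlocE hA'locE, hvind, ?_⟩
          intro v' hv' hv'n hv'ind
          have hv'ind2 : IsIndep G (insert v' A') := by
            refine aux_indep_subset G ?_ hv'ind
            intro m hm
            rcases Finset.mem_insert.mp hm with rfl | hm
            · exact Finset.mem_insert_self _ _
            · exact Finset.mem_insert_of_mem (Finset.mem_insert_of_mem hm)
          by_cases hv'x : v' = v
          · exact hv'n (hv'x ▸ Finset.mem_insert_self _ _)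
          · exact hA'max.2.2 v' (Finset.mem_erase.mpr ⟨hv'x, hv'⟩)
              (fun h => hv'n (Finset.mem_insert_of_mem h)) hv'ind2
        have hcx := aux_H_card G H huw hxA'max
        have hA'c : A'.card + 2 = alphaIn G (univ : Finset V) := by
          rw [Finset.card_insert_of_notMem hvA'] at hcx
          omega
        have hxB : IsIndep G (insert v (insert u A')) := by
          have : insert v (insert u A') = insert u (insert v A') := Finset.insert_comm v u A'
          rw [this]
          apply aux_indep_insert G hvind
          intro m hm hadj
          rcases Finset.mem_insert.mp hm with rfl | hm
          · exact hux hadj.symm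
          · exact ((aux_mem_locE G).mp (hA'locE hm)).1 hadj.symm
        obtain ⟨Bhat, hBBhat, hBhatmax⟩ := aux_exists_max_extension G hBsub hBindep
        by_cases hBhatx : IsIndep G (insert v Bhat)
        · have hBhatcard := badCard Bhat hBhatmax hBhatx
          have hBhatB : insert u A' = Bhat := by
            apply Finset.eq_of_subset_of_card_le hBBhat
            rw [Finset.card_insert_of_notMem huA']
            omega
          have hBhatBad : Bhat ∈ Bad := by
            rw [hBadDef, Finset.mem_filter, Finset.mem_powerset]
            exact ⟨hBhatmax.1, hBhatmax, hBhatx⟩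
          have hle : (Bhat ∩ W).card ≤ (N ∩ W).card :=
            hpmax (Bhat, W) (Finset.mem_product.mpr ⟨hBhatBad, hWBigmem⟩)
          have hBWA : Bhat ∩ W = W \ nbr G u := by
            rw [← hBhatB]
            apply Finset.Subset.antisymm
            · intro m hm
              rw [Finset.mem_inter] at hm
              obtain ⟨hm1, hm2⟩ := hm
              rcases Finset.mem_insert.mp hm1 with rfl | hm1
              · exact absurd hm2 huW
              · rw [Finset.mem_sdiff]
                exact ⟨hm2, fun hnb =>
                  ((aux_mem_locE G).mp (hA'locE hm1)).1 ((aux_mem_nbr G).mp hnb)⟩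
            · intro m hm
              exact Finset.mem_inter.mpr
                ⟨Finset.mem_insert_of_mem (hAA' hm), (Finset.mem_sdiff.mp hm).1⟩
          rw [hBWA] at hle
          have hAeq := Finset.eq_of_subset_of_card_le hMWA hle
          refine ⟨hwx, ?_⟩
          intro m hm
          have hmNW : m ∈ N ∩ W := by rw [hAeq]; exact hm
          exact (Finset.mem_inter.mp hmNW).1
        · exfalso
          have hBhatuniv : IsMaxIndepIn G (univ : Finset V) Bhat := by
            refine ⟨Finset.subset_univ _, hBhatmax.2.1, ?_⟩
            intro v' _ hv' hind
            by_cases h : v' = v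
            · subst h; exact hBhatx hind
            · exact hBhatmax.2.2 v' (Finset.mem_erase.mpr ⟨h, Finset.mem_univ _⟩) hv' hind
          have hBhatc : Bhat.card = alphaIn G (univ : Finset V) :=
            aux_wellcov_univ G H Bhat hBhatuniv
          have hBhatBig : Bhat ∈ Big := by
            rw [hBigDef, Finset.mem_filter, Finset.mem_powerset]
            exact ⟨hBhatmax.1, hBhatmax.2.1, hBhatc⟩
          have hle : (N ∩ Bhat).card ≤ (N ∩ W).card :=
            hpmax (N, Bhat) (Finset.mem_product.mpr ⟨hNBadmem, hBhatBig⟩)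
          have hsub2 : insert u (N ∩ W) ⊆ N ∩ Bhat := by
            intro m hm
            rcases Finset.mem_insert.mp hm with rfl | hm
            · exact Finset.mem_inter.mpr ⟨huN, hBBhat (Finset.mem_insert_self _ _)⟩
            · exact Finset.mem_inter.mpr
                ⟨(Finset.mem_inter.mp hm).1,
                  hBBhat (Finset.mem_insert_of_mem (hNWsubA' hm))⟩
          have hcard2 := Finset.card_le_card hsub2
          rw [Finset.card_insert_of_notMem (fun h => huW (Finset.mem_inter.mp h).2)] at hcard2
          omega
    obtain ⟨w0, hw0W, hw0adj⟩ := hexw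
    have hWN : W \ nbr G u ⊆ N := (key w0 hw0W hw0adj).2
    have hfin : IsIndep G (insert x W) := by
      apply aux_indep_insert G hWindep
      intro m hm
      by_cases hadj : G.Adj u m
      · exact fun h => (key m hm hadj).1 h
      · intro h
        have hmN : m ∈ N := hWN (Finset.mem_sdiff.mpr
          ⟨hm, fun hh => hadj ((aux_mem_nbr G).mp hh)⟩)
        exact hNx m (Finset.mem_insert_of_mem hmN) x (Finset.mem_insert_self _ _) h
    have hxW : x ∉ W := fun h => (Finset.mem_erase.mp (hWsub h)).1 rfl
    have hle := aux_card_le_alphaIn G (Finset.subset_univ _) hfin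
    rw [Finset.card_insert_of_notMem hxW] at hle
    omega

lemma aux_forward (G : SimpleGraph V) (htf : G.CliqueFree 3) (h : W2In G (univ : Finset V))
    {a b : V} (hab : G.Adj a b) :
    ∀ T, IsMaxIndepIn G (locE G a b) T → T.card + 1 = alphaIn G (univ : Finset V) := by
  classical
  intro T hT
  have hbT : b ∉ T := fun hm => ((aux_mem_locE G).mp (hT.1 hm)).1 hab
  have hTb : IsIndep G (insert b T) :=
    aux_indep_insert G hT.2.1
      (fun m hm hadj => ((aux_mem_locE G).mp (hT.1 hm)).2 hadj.symm)
  obtain ⟨M, hTM, hMmax⟩ := aux_exists_max_extension G (Finset.subset_univ (insert b T)) hTb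
  have hMcard : M.card = alphaIn G (univ : Finset V) := h.1 M hMmax
  have hTsubM : T ⊆ M := (Finset.subset_insert b T).trans hTM
  by_cases hP : M ⊆ insert b T
  · have hMeq : M = insert b T := Finset.Subset.antisymm hP hTM
    rw [hMeq, Finset.card_insert_of_notMem hbT] at hMcard
    exact hMcard
  · exfalso
    obtain ⟨p, hpM, hpT⟩ := Finset.not_subset.mp hP
    have hpT' : p ∉ T := fun hh => hpT (Finset.mem_insert_of_mem hh)
    have hpb : p ≠ b := fun hh => hpT (hh ▸ Finset.mem_insert_self _ _)
    have hbM : b ∈ M := hTM (Finset.mem_insert_self _ _)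
    have hplocE : p ∉ locE G a b := by
      intro hpl
      exact hT.2.2 p hpl hpT'
        (aux_indep_subset G (Finset.insert_subset hpM hTsubM) hMmax.2.1)
    have hap : G.Adj a p := by
      by_cases h1 : G.Adj a p
      · exact h1
      · exfalso
        by_cases h2 : G.Adj b p
        · exact hMmax.2.1 b hbM p hpM h2
        · exact hplocE ((aux_mem_locE G).mpr ⟨h1, h2⟩)
    have hMerase_sub : M.erase p ⊆ (univ : Finset V).erase p := fun m hm =>
      Finset.mem_erase.mpr ⟨(Finset.mem_erase.mp hm).1, Finset.mem_univ _⟩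
    have hMerase_indep : IsIndep G (M.erase p) :=
      aux_indep_subset G (Finset.erase_subset _ _) hMmax.2.1
    obtain ⟨M', hsubM', hM'max⟩ := aux_exists_max_extension G hMerase_sub hMerase_indep
    have hW2 := h.2 p (Finset.mem_univ p)
    have hM'card : M'.card = alphaIn G (univ : Finset V) :=
      (hW2.1 M' hM'max).trans hW2.2
    have hpM' : p ∉ M' := fun hh => (Finset.mem_erase.mp (hM'max.1 hh)).1 rfl
    have hcard1 : (M' \ M.erase p).card = 1 := by
      rw [Finset.card_sdiff_of_subset hsubM', Finset.card_erase_of_mem hpM]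
      have hMpos : 1 ≤ M.card := Finset.card_pos.mpr ⟨p, hpM⟩
      omega
    obtain ⟨z, hzeq⟩ := Finset.card_eq_one.mp hcard1
    have hzmem : z ∈ M' ∧ z ∉ M.erase p := by
      have hh : z ∈ M' \ M.erase p := by rw [hzeq]; exact Finset.mem_singleton_self z
      exact Finset.mem_sdiff.mp hh
    have hzp : z ≠ p := fun hh => hpM' (hh ▸ hzmem.1)
    have hzM : z ∉ M := fun hh => hzmem.2 (Finset.mem_erase.mpr ⟨hzp, hh⟩)
    have hTMe : T ⊆ M.erase p := fun m hm =>
      Finset.mem_erase.mpr ⟨fun hh => hpT' (hh ▸ hm), hTsubM hm⟩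
    have hbMe : b ∈ M.erase p := Finset.mem_erase.mpr ⟨fun hh => hpb hh.symm, hbM⟩
    obtain ⟨m, hmM, hmz⟩ := aux_maxIndep_adj G hMmax (Finset.mem_univ z) hzM
    have hmp : m = p := by
      by_contra hne
      exact hM'max.2.1 m (hsubM' (Finset.mem_erase.mpr ⟨hne, hmM⟩)) z hzmem.1 hmz
    have hpz : G.Adj p z := hmp ▸ hmz
    have hbz : ¬ G.Adj b z := fun hh => hM'max.2.1 b (hsubM' hbMe) z hzmem.1 hh
    have hza : z ≠ a := fun hh => hbz (hh ▸ hab.symm)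
    have haz : ¬ G.Adj a z := by
      intro hh
      exact htf _ (SimpleGraph.is3Clique_triple_iff.mpr ⟨hap, hh, hpz⟩)
    have hzlocE : z ∈ locE G a b := (aux_mem_locE G).mpr ⟨haz, hbz⟩
    have hzT : z ∉ T := fun hh => hzM (hTsubM hh)
    have hzTindep : IsIndep G (insert z T) :=
      aux_indep_insert G hT.2.1
        (fun m' hm' hadj => hM'max.2.1 m' (hsubM' (hTMe hm')) z hzmem.1 hadj)
    exact hT.2.2 z hzlocE hzT hzTindep

end EdgeIdealAux

/-- A triangle-free graph without isolated vertices is in `W₂` if and only if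
`G_{ab}` is well-covered with `α(G_{ab}) = α(G) - 1` for every edge `ab`. -/
theorem stmt5 (G : SimpleGraph V) (htf : G.CliqueFree 3)
    (hni : ∀ v : V, ∃ u : V, G.Adj v u) :
    W2In G Finset.univ ↔
      ∀ a b : V, G.Adj a b → WellCoveredIn G (locE G a b) ∧
        alphaIn G (locE G a b) = alphaIn G Finset.univ - 1 := by
  classical
  constructor
  · intro h a b hab
    obtain ⟨T0, -, hT0⟩ := aux_exists_max_extension G
      (Finset.empty_subset (locE G a b)) (aux_indep_empty G)
    have hcl : ∀ T, IsMaxIndepIn G (locE G a b) T → T.card + 1 = alphaIn G (univ : Finset V) :=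
      aux_forward G htf h hab
    have h0 := hcl T0 hT0
    have halpha : alphaIn G (locE G a b) = T0.card := by
      refine le_antisymm ?_ (aux_card_le_alphaIn G hT0.1 hT0.2.1)
      obtain ⟨S, hS1, hS2, hS3⟩ := aux_exists_alphaIn G (locE G a b)
      obtain ⟨T1, hST1, hT1⟩ := aux_exists_max_extension G hS1 hS2
      have h1 := hcl T1 hT1
      have h2 := Finset.card_le_card hST1
      omega
    constructor
    · intro S hS
      have := hcl S hS
      omega
    · omega
  · intro H
    refine ⟨aux_wellcov_univ G H, ?_⟩
    intro x _
    exact aux_erase G H hni x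


end EdgeIdealPaper
end

section
/- Let G be a well-covered graph with α(G) ≥ 2, let y, z be two nonadjacent vertices with N_G(z) ⊆ N_G(y) and N_G(z) ≠ ∅, and let w ∈ N_G(z). Then α(G_{yw}) ≤ α(G) − 2, where G_{yw} = G \ (N_G(y) ∪ N_G(w)). -/
open Finset

section EdgeIdealPaper

variable {V : Type*} [Fintype V] [DecidableEq V]

/-- If `G` is well-covered with `α(G) ≥ 2`, `y, z` are nonadjacent vertices with
`∅ ≠ N_G(z) ⊆ N_G(y)`, and `w ∈ N_G(z)`, then `α(G_{yw}) ≤ α(G) - 2`. -/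
theorem stmt18 (G : SimpleGraph V) (hwc : WellCoveredIn G Finset.univ)
    (hα : 2 ≤ alphaIn G Finset.univ)
    (y z : V) (hne : y ≠ z) (hadj : ¬ G.Adj y z)
    (hsub : nbr G z ⊆ nbr G y) (hz : nbr G z ≠ ∅)
    (w : V) (hw : w ∈ nbr G z) :
    alphaIn G (locE G y w) ≤ alphaIn G Finset.univ - 2 := by
  classical
  have hzw : G.Adj z w := by simpa [nbr] using hw
  have hyw : G.Adj y w := by simpa [nbr] using hsub hw
  obtain ⟨S, hSmem, hSval⟩ := Finset.exists_mem_eq_sup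
    (((locE G y w).powerset).filter (fun S => IsIndep G S))
    ⟨∅, by rw [Finset.mem_filter]; simp [IsIndep]⟩ Finset.card
  rw [Finset.mem_filter, Finset.mem_powerset] at hSmem
  obtain ⟨hSsub, hSind⟩ := hSmem
  have hSny : ∀ s ∈ S, ¬ G.Adj y s ∧ ¬ G.Adj w s := by
    intro s hs
    have h := hSsub hs
    simp only [locE, nbr, Finset.mem_sdiff, Finset.mem_union, Finset.mem_filter,
      Finset.mem_univ, true_and] at h
    tauto
  have hSnz : ∀ s ∈ S, ¬ G.Adj z s := by
    intro s hs hAdj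
    have : s ∈ nbr G y := hsub (by simpa [nbr] using hAdj)
    exact (hSny s hs).1 (by simpa [nbr] using this)
  have hyS : y ∉ S := fun h => (hSny y h).2 hyw.symm
  have hzS : z ∉ S := fun h => (hSny z h).2 hzw.symm
  set T : Finset V := insert y (insert z S) with hT
  have hTind : IsIndep G T := by
    intro u hu v hv hAdj
    simp only [hT, Finset.mem_insert] at hu hv
    rcases hu with rfl | rfl | hu <;> rcases hv with rfl | rfl | hv
    · exact G.irrefl hAdj
    · exact hadj hAdj
    · exact (hSny v hv).1 hAdj
    · exact hadj hAdj.symm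
    · exact G.irrefl hAdj
    · exact hSnz v hv hAdj
    · exact (hSny u hu).1 hAdj.symm
    · exact hSnz u hu hAdj.symm
    · exact hSind u hu v hv hAdj
  have hTcard : T.card = S.card + 2 := by
    rw [hT, Finset.card_insert_of_notMem (by simp [hne, hyS]),
      Finset.card_insert_of_notMem hzS]
  have hle : T.card ≤ alphaIn G Finset.univ := by
    rw [alphaIn]
    exact Finset.le_sup (by simp [hTind])
  have hval : alphaIn G (locE G y w) = S.card := by rw [alphaIn]; exact hSval
  omega

end EdgeIdealPaper
end
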